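/- Let A be the 3×3 matrix with rows (1, 3, 4), (2, 5, 8), (6, 7, 9). Then: (i) there is no real 3×3 matrix B with rank(B) ≤ 1 having the same order of entries as A; and (ii) there exists a real 3×3 matrix of rank 2 with the same order of entries as A. Hence the underlying rank of A equals 2, even though every column of A is in the same (increasing) order, so that the monotone rank of A is 1. -/

import Mathlib

/-- `B` has the same order of entries as `A`. -/
def SameOrder {m n : ℕ} (A B : Matrix (Fin m) (Fin n) ℝ) : Prop :=
  ∀ i j k l, A i j < A k l ↔ B i j < B k l

/-- The matrix of Example "strict": rows (1,3,4), (2,5,8), (6,7,9). -/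
noncomputable def Astrict : Matrix (Fin 3) (Fin 3) ℝ :=
  !![1, 3, 4; 2, 5, 8; 6, 7, 9]

/-- The key algebraic contradiction: an increasing chain of eight reals cannot satisfy
the two minor identities coming from a rank-one matrix. -/
lemma key_contra (b c d e f g h i : ℝ) (h1 : b < c) (h2 : c < d) (h3 : d < e) (h4 : e < f)
    (h5 : f < g) (h6 : g < h) (h7 : h < i)
    (m1 : b*g = e*f) (m2 : c*h = d*e) : False := by
  rcases lt_trichotomy e 0 with he | he | he
  · have hh : h < 0 := by nlinarith
    nlinarith [mul_pos (sub_pos.2 h1) (neg_pos.2 (lt_trans h6 hh)),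
      mul_pos (sub_pos.2 h6) (neg_pos.2 (lt_trans (lt_trans h2 h3) he))]
  · have hh : (0:ℝ) < h := by linarith
    have hc : c = 0 := by
      rcases lt_trichotomy c 0 with hc | hc | hc
      · nlinarith
      · exact hc
      · nlinarith
    have hg : (0:ℝ) < g := by linarith
    nlinarith
  · have hf : (0:ℝ) < f := lt_trans he h4
    have hg : (0:ℝ) < g := lt_trans hf h5
    have hh : (0:ℝ) < h := lt_trans hg h6
    rcases le_or_gt c 0 with hc | hc
    · have hd : d ≤ 0 := by nlinarith
      have hb : b < 0 := lt_of_lt_of_le h1 hc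
      nlinarith
    · have hd : 0 < d := by nlinarith
      have hb : 0 < b := by nlinarith
      nlinarith [mul_pos (sub_pos.2 h1) hg, mul_pos hc (sub_pos.2 h6)]

/-- A real 3×3 matrix of rank at most one has all its 2×2 minors equal to zero. -/
lemma minors_of_rank_le_one {B : Matrix (Fin 3) (Fin 3) ℝ} (h : B.rank ≤ 1) :
    ∀ i k j l, B i j * B k l = B i l * B k j := by
  unfold Matrix.rank at h
  obtain ⟨v, hv⟩ := finrank_le_one_iff.mp h
  have key : ∀ j : Fin 3, ∃ c : ℝ, ∀ i, B i j = c * (v : Fin 3 → ℝ) i := by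
    intro j
    have hmem : (fun i => B i j) ∈ LinearMap.range B.mulVecLin := by
      refine ⟨Pi.single j 1, ?_⟩
      ext i
      simp [Matrix.mulVecLin_apply]
    obtain ⟨c, hc⟩ := hv ⟨fun i => B i j, hmem⟩
    refine ⟨c, fun i => ?_⟩
    have := congrArg (fun w : ↥(LinearMap.range B.mulVecLin) => (w : Fin 3 → ℝ) i) hc
    simpa [Matrix.transpose_apply] using this.symm
  choose c hc using key
  intro i k j l
  rw [hc, hc, hc, hc]; ring

/-- (i) No matrix of rank at most one has the same order of entries as `Astrict`;
(ii) some rank-two matrix has the same order of entries as `Astrict` (so its underlying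
rank is exactly 2); (iii) yet some matrix of rank at most one has the same order within
every column (so its monotone rank is 1). -/
theorem stmt18 :
    (¬ ∃ B : Matrix (Fin 3) (Fin 3) ℝ, B.rank ≤ 1 ∧ SameOrder Astrict B) ∧
    (∃ B : Matrix (Fin 3) (Fin 3) ℝ, B.rank = 2 ∧ SameOrder Astrict B) ∧
    (∃ B : Matrix (Fin 3) (Fin 3) ℝ, B.rank ≤ 1 ∧
      ∀ j i k, Astrict i j < Astrict k j ↔ B i j < B k j) := by
  refine ⟨?_, ?_, ?_⟩
  · rintro ⟨B, hrank, hord⟩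
    have minor := minors_of_rank_le_one hrank
    have o1 : B 1 0 < B 0 1 := (hord 1 0 0 1).mp (by norm_num [Astrict])
    have o2 : B 0 1 < B 0 2 := (hord 0 1 0 2).mp (by norm_num [Astrict, Matrix.cons_val_two])
    have o3 : B 0 2 < B 1 1 := (hord 0 2 1 1).mp (by norm_num [Astrict, Matrix.cons_val_two])
    have o4 : B 1 1 < B 2 0 := (hord 1 1 2 0).mp (by norm_num [Astrict, Matrix.cons_val_two])
    have o5 : B 2 0 < B 2 1 := (hord 2 0 2 1).mp (by norm_num [Astrict, Matrix.cons_val_two])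
    have o6 : B 2 1 < B 1 2 := (hord 2 1 1 2).mp (by norm_num [Astrict, Matrix.cons_val_two])
    have o7 : B 1 2 < B 2 2 := (hord 1 2 2 2).mp (by norm_num [Astrict, Matrix.cons_val_two])
    exact key_contra (B 1 0) (B 0 1) (B 0 2) (B 1 1) (B 2 0) (B 2 1) (B 1 2) (B 2 2)
      o1 o2 o3 o4 o5 o6 o7 (minor 1 2 0 1) (minor 0 1 1 2)
  · refine ⟨!![1, 3, 4; 2, 5, 8; 6, 7, 24], ?_, ?_⟩
    · have hle : (!![1, 3, 4; 2, 5, 8; 6, 7, 24] : Matrix (Fin 3) (Fin 3) ℝ).rank ≤ 2 := by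
        have hfac : (!![1, 3, 4; 2, 5, 8; 6, 7, 24] : Matrix (Fin 3) (Fin 3) ℝ) =
            (!![1, 3; 2, 5; 6, 7] : Matrix (Fin 3) (Fin 2) ℝ) *
            (!![1, 0, 4; 0, 1, 0] : Matrix (Fin 2) (Fin 3) ℝ) := by
          ext i j
          fin_cases i <;> fin_cases j <;>
            simp [Matrix.mul_apply, Fin.sum_univ_succ] <;> norm_num
        rw [hfac]
        calc ((!![1, 3; 2, 5; 6, 7] : Matrix (Fin 3) (Fin 2) ℝ) *
              (!![1, 0, 4; 0, 1, 0] : Matrix (Fin 2) (Fin 3) ℝ)).rank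
            ≤ (!![1, 0, 4; 0, 1, 0] : Matrix (Fin 2) (Fin 3) ℝ).rank :=
              Matrix.rank_mul_le_right _ _
          _ ≤ Fintype.card (Fin 2) := Matrix.rank_le_card_height _
          _ = 2 := by simp
      have hgt : ¬ (!![1, 3, 4; 2, 5, 8; 6, 7, 24] : Matrix (Fin 3) (Fin 3) ℝ).rank ≤ 1 := by
        intro h
        have := minors_of_rank_le_one h 0 1 0 1
        norm_num at this
      omega
    · intro i j k l
      fin_cases i <;> fin_cases j <;> fin_cases k <;> fin_cases l <;>
        norm_num [Astrict]
  · refine ⟨Matrix.of (fun i _ => (i.val : ℝ)), ?_, ?_⟩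
    · have hfac : Matrix.of (fun (i : Fin 3) (_ : Fin 3) => (i.val : ℝ)) =
          (Matrix.of (fun (i : Fin 3) (_ : Fin 1) => (i.val : ℝ))) *
          (Matrix.of (fun (_ : Fin 1) (_ : Fin 3) => (1 : ℝ))) := by
        ext i j
        simp [Matrix.mul_apply]
      rw [hfac]
      calc _ ≤ (Matrix.of (fun (_ : Fin 1) (_ : Fin 3) => (1 : ℝ))).rank :=
            Matrix.rank_mul_le_right _ _
        _ ≤ Fintype.card (Fin 1) := Matrix.rank_le_card_height _
        _ = 1 := by simp
    · intro j i k
      fin_cases i <;> fin_cases j <;> fin_cases k <;> norm_num [Astrict]
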